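/- Fix an integer r ≥ 2 and 0 < γ₃ < γ₄ < γ₅, and set A = γ₅ − γ₄ + log_r 2 and B = γ₄ − γ₃ − log_r 2, assuming B > 0. Every finite tree Γ in which every node has at most r^{γ₅} children has a subtree Γ' with the property that every node Q of Γ' satisfies |F_{Γ', r^{γ₃}}(Q)| ≥ (|A_{Γ'}(Q)|·B + log_r H_r^{γ₄}(Γ)) / (A + B). -/

import Mathlib

/-- The data `(Γ, h, P)` is a tree of height `N`: there is exactly one node of height
`0` (the root), all heights are at most `N`, the parent of a non-root node lies in the
tree one level up, and every node of height `< N` has a child (i.e. `P(Γ_n) = Γ_{n-1}`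
for `1 ≤ n ≤ N`). -/
def IsTree {α : Type*} (N : ℕ) (Γ : Finset α) (h : α → ℕ) (P : α → α) : Prop :=
  (∃! q, q ∈ Γ ∧ h q = 0) ∧
  (∀ q ∈ Γ, h q ≤ N) ∧
  (∀ q ∈ Γ, h q ≠ 0 → P q ∈ Γ ∧ h (P q) = h q - 1) ∧
  (∀ q ∈ Γ, h q < N → ∃ p ∈ Γ, h p = h q + 1 ∧ P p = q)

/-- The children of a node `q`: the nodes of the tree whose parent is `q`. -/
def children {α : Type*} [DecidableEq α] (Γ : Finset α) (h : α → ℕ) (P : α → α)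
    (q : α) : Finset α :=
  Γ.filter fun p => h p ≠ 0 ∧ P p = q

/-- `C` is a cut of the tree `(Γ, h, P)` of height `N`: for every leaf `L`
(node of height `N`), some iterated parent of `L` (possibly `L` itself) lies in `C`. -/
def IsCut {α : Type*} (N : ℕ) (Γ : Finset α) (h : α → ℕ) (P : α → α)
    (C : Finset α) : Prop :=
  C ⊆ Γ ∧ ∀ L ∈ Γ, h L = N → ∃ k ≤ h L, P^[k] L ∈ C

/-- The `γ`-Hausdorff content of the tree `(Γ, h, P)` of height `N` with base `r`:
the minimum over cuts `C` of `∑_{Q ∈ C} r^{-height(Q) γ}`. -/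
noncomputable def treeContent {α : Type*} (N : ℕ) (Γ : Finset α) (h : α → ℕ)
    (P : α → α) (r : ℕ) (γ : ℝ) : ℝ :=
  sInf {v : ℝ | ∃ C : Finset α, IsCut N Γ h P C ∧
    v = ∑ q ∈ C, (r : ℝ) ^ (-(h q : ℝ) * γ)}

/-- The ancestry of a node `Q`: the set `{P^k(Q) : 1 ≤ k ≤ height Q}`. -/
def ancestry {α : Type*} [DecidableEq α] (h : α → ℕ) (P : α → α) (Q : α) : Finset α :=
  (Finset.Icc 1 (h Q)).image fun k => P^[k] Q

/-- The `c`-fertile ancestors of `Q` in the tree with node set `Γ'`: those ancestors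
having at least `c` children in `Γ'`. -/
noncomputable def fertileAnc {α : Type*} [DecidableEq α] (Γ' : Finset α) (h : α → ℕ)
    (P : α → α) (c : ℝ) (Q : α) : Finset α :=
  (ancestry h P Q).filter fun a => c ≤ ((children Γ' h P a).card : ℝ)

lemma rpos' (r : ℕ) (hr : 2 ≤ r) : (0:ℝ) < r := by
  have : 0 < r := by omega
  exact_mod_cast this

section Aux

variable {α : Type*} [DecidableEq α] (N : ℕ) (Γ : Finset α) (h : α → ℕ) (P : α → α)
  (r : ℕ) (γ₄ : ℝ)

/-- recursive content-like premeasure with fuel -/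
noncomputable def mu : ℕ → α → ℝ
  | 0, q => (r:ℝ) ^ (-(h q : ℝ) * γ₄)
  | (k+1), q => min ((r:ℝ) ^ (-(h q : ℝ) * γ₄)) (∑ p ∈ children Γ h P q, mu k p)

noncomputable def muv (q : α) : ℝ := mu Γ h P r γ₄ (N - h q) q

variable (hT : IsTree N Γ h P)

include hT

lemma child_spec {q p : α} (hq : q ∈ Γ) (hp : p ∈ children Γ h P q) :
    p ∈ Γ ∧ h p = h q + 1 ∧ P p = q := by
  obtain ⟨hpΓ, hp0, hpP⟩ := Finset.mem_filter.mp hp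
  refine ⟨hpΓ, ?_, hpP⟩
  have h2 := (hT.2.2.1 p hpΓ hp0).2
  rw [hpP] at h2
  omega

lemma children_nonempty {q : α} (hq : q ∈ Γ) (hlt : h q < N) :
    (children Γ h P q).Nonempty := by
  obtain ⟨p, hpΓ, hp1, hpP⟩ := hT.2.2.2 q hq hlt
  exact ⟨p, Finset.mem_filter.mpr ⟨hpΓ, by omega, hpP⟩⟩

lemma iter_mem {q : α} (hq : q ∈ Γ) :
    ∀ k, k ≤ h q → P^[k] q ∈ Γ ∧ h (P^[k] q) = h q - k := by
  intro k
  induction k with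
  | zero => intro _; simpa using hq
  | succ k ih =>
    intro hk
    obtain ⟨hm, hh⟩ := ih (by omega)
    rw [Function.iterate_succ_apply']
    have h0 : h (P^[k] q) ≠ 0 := by omega
    obtain ⟨h1, h2⟩ := hT.2.2.1 _ hm h0
    exact ⟨h1, by omega⟩

variable (hr : 2 ≤ r)

include hr

lemma mu_pos : ∀ k, ∀ q ∈ Γ, h q + k = N → 0 < mu Γ h P r γ₄ k q := by
  intro k
  induction k with
  | zero => intro q _ _; exact Real.rpow_pos_of_pos (rpos' r hr) _
  | succ k ih =>
    intro q hq hk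
    rw [mu]
    refine lt_min (Real.rpow_pos_of_pos (rpos' r hr) _) ?_
    refine Finset.sum_pos (fun p hp => ?_) (children_nonempty N Γ h P hT hq (by omega))
    obtain ⟨h1, h2, _⟩ := child_spec N Γ h P hT hq hp
    exact ih p h1 (by omega)

lemma muv_pos {q : α} (hq : q ∈ Γ) : 0 < muv N Γ h P r γ₄ q := by
  have hle := hT.2.1 q hq
  exact mu_pos N Γ h P r γ₄ hT hr (N - h q) q hq (by omega)

omit hr

lemma muv_le (q : α) : muv N Γ h P r γ₄ q ≤ (r:ℝ) ^ (-(h q : ℝ) * γ₄) := by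
  unfold muv
  cases hk : N - h q with
  | zero => rw [mu]
  | succ k => rw [mu]; exact min_le_left _ _

lemma muv_eq {q : α} (hq : q ∈ Γ) (hlt : h q < N) :
    muv N Γ h P r γ₄ q =
      min ((r:ℝ) ^ (-(h q : ℝ) * γ₄)) (∑ p ∈ children Γ h P q, muv N Γ h P r γ₄ p) := by
  have hk : N - h q = (N - h q - 1) + 1 := by omega
  unfold muv
  rw [hk, mu]
  congr 1
  refine Finset.sum_congr rfl (fun p hp => ?_)
  have h2 := (child_spec N Γ h P hT hq hp).2.1
  have : N - h p = N - h q - 1 := by omega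
  rw [this]

include hr

lemma muv_sum_children {q : α} (hq : q ∈ Γ) (hlt : h q < N) :
    muv N Γ h P r γ₄ q ≤ ∑ p ∈ children Γ h P q, muv N Γ h P r γ₄ p := by
  rw [muv_eq N Γ h P r γ₄ hT hq hlt]; exact min_le_right _ _

omit hT hr

lemma sum_biUnion_le {β : Type*} [DecidableEq β] (s : Finset β) (t : β → Finset α)
    (f : α → ℝ) (hf : ∀ x, 0 ≤ f x) :
    ∑ x ∈ s.biUnion t, f x ≤ ∑ b ∈ s, ∑ x ∈ t b, f x := by
  classical
  induction s using Finset.induction with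
  | empty => simp
  | insert b s hb ih =>
    rw [Finset.biUnion_insert, Finset.sum_insert hb]
    calc ∑ x ∈ t b ∪ s.biUnion t, f x
        ≤ ∑ x ∈ t b, f x + ∑ x ∈ s.biUnion t, f x := by
          have := Finset.sum_union_inter (s₁ := t b) (s₂ := s.biUnion t) (f := f)
          have h2 : 0 ≤ ∑ x ∈ t b ∩ s.biUnion t, f x := Finset.sum_nonneg fun x _ => hf x
          linarith
      _ ≤ ∑ x ∈ t b, f x + ∑ b ∈ s, ∑ x ∈ t b, f x := by linarith [ih]

include hT hr

lemma exists_cut_le : ∀ k, ∀ q ∈ Γ, h q + k = N →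
    ∃ C : Finset α, C ⊆ Γ ∧
      (∀ L ∈ Γ, h L = N → P^[k] L = q → ∃ j ≤ N, P^[j] L ∈ C) ∧
      ∑ x ∈ C, (r:ℝ) ^ (-(h x : ℝ) * γ₄) ≤ mu Γ h P r γ₄ k q := by
  intro k
  induction k with
  | zero =>
    intro q hq hk
    refine ⟨{q}, by simpa using hq, fun L hL hLN hPL => ⟨0, by omega, by simpa using hPL⟩, ?_⟩
    rw [mu, Finset.sum_singleton]
  | succ k ih =>
    intro q hq hk
    rcases le_or_gt ((r:ℝ) ^ (-(h q : ℝ) * γ₄))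
        (∑ p ∈ children Γ h P q, mu Γ h P r γ₄ k p) with hc | hc
    · refine ⟨{q}, by simpa using hq, fun L hL hLN hPL => ⟨k+1, by omega, by simpa using hPL⟩, ?_⟩
      rw [mu, Finset.sum_singleton, min_eq_left hc]
    · have Hex : ∀ p, ∃ Cp : Finset α, p ∈ children Γ h P q →
          Cp ⊆ Γ ∧ (∀ L ∈ Γ, h L = N → P^[k] L = p → ∃ j ≤ N, P^[j] L ∈ Cp) ∧
          ∑ x ∈ Cp, (r:ℝ) ^ (-(h x : ℝ) * γ₄) ≤ mu Γ h P r γ₄ k p := by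
        intro p
        by_cases hp : p ∈ children Γ h P q
        · obtain ⟨h1, h2, _⟩ := child_spec N Γ h P hT hq hp
          obtain ⟨Cp, hsub, hcut, hsum⟩ := ih p h1 (by omega)
          exact ⟨Cp, fun _ => ⟨hsub, hcut, hsum⟩⟩
        · exact ⟨∅, fun hp' => absurd hp' hp⟩
      choose f hf using Hex
      refine ⟨(children Γ h P q).biUnion f, ?_, ?_, ?_⟩
      · intro x hx
        obtain ⟨p, hp, hxp⟩ := Finset.mem_biUnion.mp hx
        exact (hf p hp).1 hxp
      · intro L hL hLN hPL
        have hkN : k ≤ h L := by omega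
        obtain ⟨hmem, hh⟩ := iter_mem N Γ h P hT hL k hkN
        have hp' : P^[k] L ∈ children Γ h P q := by
          refine Finset.mem_filter.mpr ⟨hmem, by omega, ?_⟩
          rw [← Function.iterate_succ_apply' P k L]; exact hPL
        obtain ⟨j, hj, hmem'⟩ := (hf _ hp').2.1 L hL hLN rfl
        exact ⟨j, hj, Finset.mem_biUnion.mpr ⟨_, hp', hmem'⟩⟩
      · rw [mu, min_eq_right (le_of_lt hc)]
        calc ∑ x ∈ (children Γ h P q).biUnion f, (r:ℝ) ^ (-(h x : ℝ) * γ₄)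
            ≤ ∑ p ∈ children Γ h P q, ∑ x ∈ f p, (r:ℝ) ^ (-(h x : ℝ) * γ₄) :=
              sum_biUnion_le _ _ _ (fun x => le_of_lt (Real.rpow_pos_of_pos (rpos' r hr) _))
          _ ≤ ∑ p ∈ children Γ h P q, mu Γ h P r γ₄ k p :=
              Finset.sum_le_sum (fun p hp => (hf p hp).2.2)

omit hr

include hT

lemma exists_node : ∀ k ≤ N, ∃ q ∈ Γ, h q = k := by
  intro k
  induction k with
  | zero =>
    intro _
    obtain ⟨q, ⟨hq, h0⟩, _⟩ := hT.1
    exact ⟨q, hq, h0⟩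
  | succ k ih =>
    intro hk
    obtain ⟨q, hq, hqk⟩ := ih (by omega)
    obtain ⟨p, hp, hp1, _⟩ := hT.2.2.2 q hq (by omega)
    exact ⟨p, hp, by omega⟩

lemma gamma_is_cut : IsCut N Γ h P Γ :=
  ⟨Finset.Subset.refl _, fun L hL _ => ⟨0, by omega, by simpa using hL⟩⟩

include hr

lemma treeContent_spec :
    ∃ C : Finset α, IsCut N Γ h P C ∧
      treeContent N Γ h P r γ₄ = ∑ q ∈ C, (r:ℝ) ^ (-(h q : ℝ) * γ₄) := by
  have hS : {v : ℝ | ∃ C : Finset α, IsCut N Γ h P C ∧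
      v = ∑ q ∈ C, (r : ℝ) ^ (-(h q : ℝ) * γ₄)}.Finite := by
    apply Set.Finite.subset (Set.Finite.image
      (f := fun C : Finset α => ∑ q ∈ C, (r : ℝ) ^ (-(h q : ℝ) * γ₄))
      (Γ.powerset : Finset (Finset α)).finite_toSet)
    rintro v ⟨C, hC, rfl⟩
    exact ⟨C, by simpa using hC.1, rfl⟩
  have hne : {v : ℝ | ∃ C : Finset α, IsCut N Γ h P C ∧
      v = ∑ q ∈ C, (r : ℝ) ^ (-(h q : ℝ) * γ₄)}.Nonempty :=
    ⟨_, Γ, gamma_is_cut N Γ h P hT, rfl⟩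
  exact Set.Nonempty.csInf_mem hne hS

lemma treeContent_pos : 0 < treeContent N Γ h P r γ₄ := by
  obtain ⟨C, hC, heq⟩ := treeContent_spec N Γ h P r γ₄ hT hr
  rw [heq]
  obtain ⟨L, hL, hLN⟩ := exists_node N Γ h P hT N (le_refl N)
  obtain ⟨k, _, hk⟩ := hC.2 L hL hLN
  exact Finset.sum_pos (fun x _ => Real.rpow_pos_of_pos (rpos' r hr) _) ⟨_, hk⟩

lemma treeContent_le_muv_root {q₀ : α} (hq₀ : q₀ ∈ Γ) (h0 : h q₀ = 0) :
    treeContent N Γ h P r γ₄ ≤ muv N Γ h P r γ₄ q₀ := by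
  obtain ⟨C, hsub, hcut, hsum⟩ := exists_cut_le N Γ h P r γ₄ hT hr N q₀ hq₀ (by omega)
  have hcut' : IsCut N Γ h P C := by
    refine ⟨hsub, fun L hL hLN => ?_⟩
    have hroot : P^[N] L = q₀ := by
      obtain ⟨hmem, hh⟩ := iter_mem N Γ h P hT hL N (by omega)
      obtain ⟨w, hw, huniq⟩ := hT.1
      have e1 := huniq _ ⟨hmem, by omega⟩
      have e2 := huniq _ ⟨hq₀, h0⟩
      rw [e1, e2]
    obtain ⟨j, hj, hmem⟩ := hcut L hL hLN hroot
    exact ⟨j, by omega, hmem⟩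
  have hbdd : BddBelow {v : ℝ | ∃ C : Finset α, IsCut N Γ h P C ∧
      v = ∑ q ∈ C, (r : ℝ) ^ (-(h q : ℝ) * γ₄)} := by
    refine ⟨0, ?_⟩
    rintro v ⟨C', hC', rfl⟩
    exact Finset.sum_nonneg (fun x _ => le_of_lt (Real.rpow_pos_of_pos (rpos' r hr) _))
  calc treeContent N Γ h P r γ₄ ≤ ∑ q ∈ C, (r:ℝ) ^ (-(h q : ℝ) * γ₄) :=
        csInf_le hbdd ⟨C, hcut', rfl⟩
    _ ≤ muv N Γ h P r γ₄ q₀ := by unfold muv; rw [h0]; simpa using hsum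

omit hT hr

noncomputable def Tset (q : α) : Finset α :=
  (children Γ h P q).filter fun p =>
    muv N Γ h P r γ₄ q / (2 * ((children Γ h P q).card : ℝ)) ≤ muv N Γ h P r γ₄ p

noncomputable def lazyPick (q : α) : α :=
  if hne : (Tset N Γ h P r γ₄ q).Nonempty then
    (Finset.exists_max_image _ (muv N Γ h P r γ₄) hne).choose
  else q

noncomputable def chosen (γ₃ : ℝ) (q : α) : Finset α :=
  if (r:ℝ) ^ γ₃ ≤ ((Tset N Γ h P r γ₄ q).card : ℝ) then Tset N Γ h P r γ₄ q
  else {lazyPick N Γ h P r γ₄ q}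

noncomputable def kept (γ₃ : ℝ) (root : α) : ℕ → Finset α
  | 0 => {root}
  | n+1 => (kept γ₃ root n).biUnion (chosen N Γ h P r γ₄ γ₃)

include hT hr

lemma Tset_sum {q : α} (hq : q ∈ Γ) (hlt : h q < N) :
    muv N Γ h P r γ₄ q / 2 ≤ ∑ p ∈ Tset N Γ h P r γ₄ q, muv N Γ h P r γ₄ p := by
  set S := children Γ h P q with hS
  set m := muv N Γ h P r γ₄ q with hm
  have hm0 : 0 < m := muv_pos N Γ h P r γ₄ hT hr hq
  have hSne : S.Nonempty := children_nonempty N Γ h P hT hq hlt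
  have hS0 : (0:ℝ) < (S.card : ℝ) := by
    exact_mod_cast Finset.card_pos.mpr hSne
  have hsplit := Finset.sum_filter_add_sum_filter_not S
    (fun p => m / (2 * (S.card : ℝ)) ≤ muv N Γ h P r γ₄ p) (muv N Γ h P r γ₄)
  have hbad : ∑ p ∈ S.filter (fun p => ¬ (m / (2 * (S.card : ℝ)) ≤ muv N Γ h P r γ₄ p)),
      muv N Γ h P r γ₄ p ≤ m / 2 := by
    have h1 : ∀ p ∈ S.filter (fun p => ¬ (m / (2 * (S.card : ℝ)) ≤ muv N Γ h P r γ₄ p)),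
        muv N Γ h P r γ₄ p ≤ m / (2 * (S.card : ℝ)) :=
      fun p hp => le_of_lt (not_le.mp (Finset.mem_filter.mp hp).2)
    calc ∑ p ∈ S.filter (fun p => ¬ (m / (2 * (S.card : ℝ)) ≤ muv N Γ h P r γ₄ p)),
          muv N Γ h P r γ₄ p
        ≤ (S.filter (fun p => ¬ (m / (2 * (S.card : ℝ)) ≤ muv N Γ h P r γ₄ p))).card •
            (m / (2 * (S.card : ℝ))) := Finset.sum_le_card_nsmul _ _ _ h1
      _ ≤ (S.card : ℝ) * (m / (2 * (S.card : ℝ))) := by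
          rw [nsmul_eq_mul]
          have hc : ((S.filter (fun p => ¬ (m / (2 * (S.card : ℝ)) ≤ muv N Γ h P r γ₄ p))).card : ℝ)
              ≤ (S.card : ℝ) := by exact_mod_cast Finset.card_filter_le _ _
          have hnn : 0 ≤ m / (2 * (S.card : ℝ)) := by positivity
          exact mul_le_mul_of_nonneg_right hc hnn
      _ = m / 2 := by field_simp
  have hsum : m ≤ ∑ p ∈ S, muv N Γ h P r γ₄ p := muv_sum_children N Γ h P r γ₄ hT hr hq hlt
  have : muv N Γ h P r γ₄ q / 2 = m - m / 2 := by rw [← hm]; ring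
  rw [this]
  unfold Tset
  rw [← hS]
  linarith [hsplit]

lemma Tset_nonempty {q : α} (hq : q ∈ Γ) (hlt : h q < N) :
    (Tset N Γ h P r γ₄ q).Nonempty := by
  rcases Finset.eq_empty_or_nonempty (Tset N Γ h P r γ₄ q) with he | hne
  · exfalso
    have h1 := Tset_sum N Γ h P r γ₄ hT hr hq hlt
    rw [he, Finset.sum_empty] at h1
    have := muv_pos N Γ h P r γ₄ hT hr hq
    linarith
  · exact hne

lemma lazyPick_spec {q : α} (hq : q ∈ Γ) (hlt : h q < N) :
    lazyPick N Γ h P r γ₄ q ∈ Tset N Γ h P r γ₄ q ∧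
      ∀ p ∈ Tset N Γ h P r γ₄ q, muv N Γ h P r γ₄ p ≤ muv N Γ h P r γ₄ (lazyPick N Γ h P r γ₄ q) := by
  have hne := Tset_nonempty N Γ h P r γ₄ hT hr hq hlt
  unfold lazyPick
  rw [dif_pos hne]
  obtain ⟨hmem, hmax⟩ := (Finset.exists_max_image _ (muv N Γ h P r γ₄) hne).choose_spec
  exact ⟨hmem, hmax⟩

lemma fertile_child_bound (γ₅ : ℝ) {q p : α} (hq : q ∈ Γ) (hlt : h q < N)
    (hc5 : ((children Γ h P q).card : ℝ) ≤ (r : ℝ) ^ γ₅)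
    (hp : p ∈ Tset N Γ h P r γ₄ q) :
    muv N Γ h P r γ₄ q / (2 * (r:ℝ) ^ γ₅) ≤ muv N Γ h P r γ₄ p := by
  have hmain := (Finset.mem_filter.mp hp).2
  have hSne := children_nonempty N Γ h P hT hq hlt
  have hS0 : (0:ℝ) < ((children Γ h P q).card : ℝ) := by
    exact_mod_cast Finset.card_pos.mpr hSne
  have hm0 := muv_pos N Γ h P r γ₄ hT hr hq
  refine le_trans ?_ hmain
  gcongr

lemma lazy_child_bound (γ₃ : ℝ) {q : α} (hq : q ∈ Γ) (hlt : h q < N)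
    (hfew : ¬ ((r:ℝ) ^ γ₃ ≤ ((Tset N Γ h P r γ₄ q).card : ℝ))) :
    muv N Γ h P r γ₄ q / (2 * (r:ℝ) ^ γ₃) ≤ muv N Γ h P r γ₄ (lazyPick N Γ h P r γ₄ q) := by
  obtain ⟨hmem, hmax⟩ := lazyPick_spec N Γ h P r γ₄ hT hr hq hlt
  set T := Tset N Γ h P r γ₄ q with hTd
  set M := muv N Γ h P r γ₄ (lazyPick N Γ h P r γ₄ q) with hM
  have hTne : T.Nonempty := ⟨_, hmem⟩
  have hT0 : (0:ℝ) < (T.card : ℝ) := by exact_mod_cast Finset.card_pos.mpr hTne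
  have hsum : muv N Γ h P r γ₄ q / 2 ≤ ∑ p ∈ T, muv N Γ h P r γ₄ p :=
    Tset_sum N Γ h P r γ₄ hT hr hq hlt
  have hub : ∑ p ∈ T, muv N Γ h P r γ₄ p ≤ (T.card : ℝ) * M := by
    have := Finset.sum_le_card_nsmul T (muv N Γ h P r γ₄) M (fun p hp => hmax p hp)
    rwa [nsmul_eq_mul] at this
  have hTc : (T.card : ℝ) ≤ (r:ℝ) ^ γ₃ := le_of_lt (not_le.mp hfew)
  have hM0 : 0 ≤ M := by
    have h1 := muv_pos N Γ h P r γ₄ hT hr hq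
    nlinarith
  have hc0 : (0:ℝ) < (r:ℝ) ^ γ₃ := Real.rpow_pos_of_pos (rpos' r hr) _
  rw [div_le_iff₀ (by positivity)]
  calc muv N Γ h P r γ₄ q ≤ 2 * ((T.card:ℝ) * M) := by linarith
    _ ≤ M * (2 * (r:ℝ) ^ γ₃) := by nlinarith

omit hT hr

noncomputable def GammaP (γ₃ : ℝ) (root : α) : Finset α :=
  (Finset.range (N+1)).biUnion (kept N Γ h P r γ₄ γ₃ root)

variable (γ₃ : ℝ) (root : α)

include hT hr

lemma chosen_sub {q : α} (hq : q ∈ Γ) (hlt : h q < N) :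
    chosen N Γ h P r γ₄ γ₃ q ⊆ children Γ h P q := by
  unfold chosen
  split
  · exact Finset.filter_subset _ _
  · intro x hx
    rw [Finset.mem_singleton] at hx
    subst hx
    exact Finset.filter_subset _ _ ((lazyPick_spec N Γ h P r γ₄ hT hr hq hlt).1)

lemma chosen_nonempty {q : α} (hq : q ∈ Γ) (hlt : h q < N) :
    (chosen N Γ h P r γ₄ γ₃ q).Nonempty := by
  unfold chosen
  split
  · exact Tset_nonempty N Γ h P r γ₄ hT hr hq hlt
  · exact Finset.singleton_nonempty _

variable (hroot : root ∈ Γ ∧ h root = 0)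
include hroot

lemma kept_spec : ∀ n, n ≤ N → ∀ q ∈ kept N Γ h P r γ₄ γ₃ root n, q ∈ Γ ∧ h q = n := by
  intro n
  induction n with
  | zero =>
    intro _ q hq
    rw [kept, Finset.mem_singleton] at hq
    subst hq
    exact hroot
  | succ n ih =>
    intro hn q hq
    rw [kept] at hq
    obtain ⟨b, hb, hqb⟩ := Finset.mem_biUnion.mp hq
    obtain ⟨hbΓ, hbh⟩ := ih (by omega) b hb
    have hblt : h b < N := by omega
    have hqc := chosen_sub N Γ h P r γ₄ hT hr γ₃ hbΓ hblt hqb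
    obtain ⟨h1, h2, _⟩ := child_spec N Γ h P hT hbΓ hqc
    exact ⟨h1, by omega⟩

lemma mem_GammaP {q : α} :
    q ∈ GammaP N Γ h P r γ₄ γ₃ root ↔ (h q ≤ N ∧ q ∈ kept N Γ h P r γ₄ γ₃ root (h q)) := by
  constructor
  · intro hq
    obtain ⟨n, hn, hqk⟩ := Finset.mem_biUnion.mp hq
    rw [Finset.mem_range] at hn
    have := (kept_spec N Γ h P r γ₄ hT hr γ₃ root hroot n (by omega) q hqk).2
    subst this
    exact ⟨by omega, hqk⟩
  · rintro ⟨hn, hqk⟩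
    exact Finset.mem_biUnion.mpr ⟨h q, Finset.mem_range.mpr (by omega), hqk⟩

lemma GammaP_sub : GammaP N Γ h P r γ₄ γ₃ root ⊆ Γ := by
  intro q hq
  obtain ⟨hn, hqk⟩ := (mem_GammaP N Γ h P r γ₄ hT hr γ₃ root hroot).mp hq
  exact (kept_spec N Γ h P r γ₄ hT hr γ₃ root hroot _ hn q hqk).1

lemma children_GammaP {q : α} {n : ℕ} (hn : n < N)
    (hq : q ∈ kept N Γ h P r γ₄ γ₃ root n) :
    children (GammaP N Γ h P r γ₄ γ₃ root) h P q = chosen N Γ h P r γ₄ γ₃ q := by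
  obtain ⟨hqΓ, hqh⟩ := kept_spec N Γ h P r γ₄ hT hr γ₃ root hroot n (by omega) q hq
  apply Finset.Subset.antisymm
  · intro x hx
    obtain ⟨hxG, hx0, hxP⟩ := Finset.mem_filter.mp hx
    obtain ⟨hxN, hxk⟩ := (mem_GammaP N Γ h P r γ₄ hT hr γ₃ root hroot).mp hxG
    have hx1 : h x ≠ 0 := hx0
    have hhx : h x = (h x - 1) + 1 := by omega
    rw [hhx, kept] at hxk
    obtain ⟨b, hb, hxb⟩ := Finset.mem_biUnion.mp hxk
    obtain ⟨hbΓ, hbh⟩ := kept_spec N Γ h P r γ₄ hT hr γ₃ root hroot _ (by omega) b hb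
    have hblt : h b < N := by
      have := child_spec N Γ h P hT hbΓ (chosen_sub N Γ h P r γ₄ hT hr γ₃ hbΓ (by omega) hxb)
      omega
    have hPx : P x = b :=
      (child_spec N Γ h P hT hbΓ (chosen_sub N Γ h P r γ₄ hT hr γ₃ hbΓ hblt hxb)).2.2
    rw [hxP] at hPx
    rw [hPx]
    exact hxb
  · intro x hx
    have hxc := chosen_sub N Γ h P r γ₄ hT hr γ₃ hqΓ (by omega) hx
    obtain ⟨hxΓ, hxh, hxP⟩ := child_spec N Γ h P hT hqΓ hxc
    have hxk : x ∈ kept N Γ h P r γ₄ γ₃ root (n+1) := by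
      rw [kept]
      exact Finset.mem_biUnion.mpr ⟨q, hq, hx⟩
    refine Finset.mem_filter.mpr ⟨?_, by omega, hxP⟩
    refine (mem_GammaP N Γ h P r γ₄ hT hr γ₃ root hroot).mpr ⟨by omega, ?_⟩
    have : h x = n + 1 := by omega
    rw [this]
    exact hxk

lemma GammaP_isTree : IsTree N (GammaP N Γ h P r γ₄ γ₃ root) h P := by
  have hrm : root ∈ GammaP N Γ h P r γ₄ γ₃ root := by
    refine (mem_GammaP N Γ h P r γ₄ hT hr γ₃ root hroot).mpr ⟨by omega, ?_⟩
    rw [hroot.2, kept]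
    exact Finset.mem_singleton_self _
  refine ⟨⟨root, ⟨hrm, hroot.2⟩, ?_⟩, ?_, ?_, ?_⟩
  · rintro q ⟨hq, hq0⟩
    obtain ⟨w, hw, huniq⟩ := hT.1
    rw [huniq q ⟨GammaP_sub N Γ h P r γ₄ hT hr γ₃ root hroot hq, hq0⟩,
      huniq root ⟨hroot.1, hroot.2⟩]
  · intro q hq
    exact hT.2.1 q (GammaP_sub N Γ h P r γ₄ hT hr γ₃ root hroot hq)
  · intro q hq hq0
    have hqΓ := GammaP_sub N Γ h P r γ₄ hT hr γ₃ root hroot hq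
    obtain ⟨hqN, hqk⟩ := (mem_GammaP N Γ h P r γ₄ hT hr γ₃ root hroot).mp hq
    refine ⟨?_, (hT.2.2.1 q hqΓ hq0).2⟩
    have hhq : h q = (h q - 1) + 1 := by omega
    rw [hhq, kept] at hqk
    obtain ⟨b, hb, hqb⟩ := Finset.mem_biUnion.mp hqk
    obtain ⟨hbΓ, hbh⟩ := kept_spec N Γ h P r γ₄ hT hr γ₃ root hroot _ (by omega) b hb
    have hblt : h b < N := by
      have := child_spec N Γ h P hT hbΓ (chosen_sub N Γ h P r γ₄ hT hr γ₃ hbΓ (by omega) hqb)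
      omega
    have hPq : P q = b :=
      (child_spec N Γ h P hT hbΓ (chosen_sub N Γ h P r γ₄ hT hr γ₃ hbΓ hblt hqb)).2.2
    rw [hPq]
    refine (mem_GammaP N Γ h P r γ₄ hT hr γ₃ root hroot).mpr ⟨by omega, ?_⟩
    rw [hbh]
    exact hb
  · intro q hq hlt
    obtain ⟨hqN, hqk⟩ := (mem_GammaP N Γ h P r γ₄ hT hr γ₃ root hroot).mp hq
    have hqΓ := GammaP_sub N Γ h P r γ₄ hT hr γ₃ root hroot hq
    obtain ⟨p, hp⟩ := chosen_nonempty N Γ h P r γ₄ hT hr γ₃ hqΓ hlt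
    obtain ⟨hpΓ, hph, hpP⟩ := child_spec N Γ h P hT hqΓ
      (chosen_sub N Γ h P r γ₄ hT hr γ₃ hqΓ hlt hp)
    refine ⟨p, ?_, hph, hpP⟩
    refine (mem_GammaP N Γ h P r γ₄ hT hr γ₃ root hroot).mpr ⟨by omega, ?_⟩
    have hpk : p ∈ kept N Γ h P r γ₄ γ₃ root (h q + 1) := by
      rw [kept]
      exact Finset.mem_biUnion.mpr ⟨q, hqk, hp⟩
    have : h p = h q + 1 := hph
    rw [this]
    exact hpk

lemma anc_kept {Q : α} {n : ℕ} (hn : n ≤ N) (hQ : Q ∈ kept N Γ h P r γ₄ γ₃ root n) :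
    ∀ k, k ≤ n → P^[k] Q ∈ kept N Γ h P r γ₄ γ₃ root (n - k) ∧
      (k < n → P^[k] Q ∈ chosen N Γ h P r γ₄ γ₃ (P^[k+1] Q)) := by
  have key : ∀ m, m ≤ N → ∀ x ∈ kept N Γ h P r γ₄ γ₃ root m, m ≠ 0 →
      P x ∈ kept N Γ h P r γ₄ γ₃ root (m - 1) ∧ x ∈ chosen N Γ h P r γ₄ γ₃ (P x) := by
    intro m hm x hx hm0
    have hm' : m = (m - 1) + 1 := by omega
    rw [hm', kept] at hx
    obtain ⟨b, hb, hxb⟩ := Finset.mem_biUnion.mp hx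
    obtain ⟨hbΓ, hbh⟩ := kept_spec N Γ h P r γ₄ hT hr γ₃ root hroot _ (by omega) b hb
    have hblt : h b < N := by omega
    have hPx : P x = b :=
      (child_spec N Γ h P hT hbΓ (chosen_sub N Γ h P r γ₄ hT hr γ₃ hbΓ hblt hxb)).2.2
    rw [hPx]
    exact ⟨hb, hxb⟩
  intro k
  induction k with
  | zero =>
    intro _
    refine ⟨by simpa using hQ, fun h0 => ?_⟩
    have := (key n hn Q hQ (by omega)).2
    simpa using this
  | succ k ih =>
    intro hk
    obtain ⟨hmem, _⟩ := ih (by omega)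
    have hstep := key (n - k) (by omega) _ hmem (by omega)
    have hmem1 : P^[k+1] Q ∈ kept N Γ h P r γ₄ γ₃ root (n - (k+1)) := by
      have e : n - (k+1) = (n - k) - 1 := by omega
      rw [e, Function.iterate_succ_apply']
      exact hstep.1
    refine ⟨hmem1, fun hlt => ?_⟩
    have hstep2 := key (n - (k+1)) (by omega) (P^[k+1] Q) hmem1 (by omega)
    have h2 := hstep2.2
    rwa [show P^[k+1+1] Q = P (P^[k+1] Q) from Function.iterate_succ_apply' P (k+1) Q]

omit hT hr hroot

noncomputable def fcnt (Q : α) (k : ℕ) : ℕ :=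
  ((Finset.Icc 1 k).filter fun j =>
    (r:ℝ)^γ₃ ≤ ((children (GammaP N Γ h P r γ₄ γ₃ root) h P (P^[j] Q)).card : ℝ)).card

lemma fcnt_le (Q : α) (k : ℕ) : fcnt N Γ h P r γ₄ γ₃ root Q k ≤ k := by
  refine le_trans (Finset.card_filter_le _ _) ?_
  simp [Nat.card_Icc]

include hT hr hroot

lemma branch_bound (γ₅ : ℝ) (hγ3 : 0 < γ₃)
    (hch : ∀ q ∈ Γ, ((children Γ h P q).card : ℝ) ≤ (r : ℝ) ^ γ₅)
    {Q : α} {n : ℕ} (hn : n ≤ N) (hQ : Q ∈ kept N Γ h P r γ₄ γ₃ root n) :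
    ∀ k, k ≤ n →
      muv N Γ h P r γ₄ (P^[k] Q) ≤ muv N Γ h P r γ₄ Q *
        (2 * (r:ℝ)^γ₅) ^ (fcnt N Γ h P r γ₄ γ₃ root Q k) *
        (2 * (r:ℝ)^γ₃) ^ (k - fcnt N Γ h P r γ₄ γ₃ root Q k) := by
  have hX0 : (0:ℝ) < 2 * (r:ℝ)^γ₅ := by
    have := Real.rpow_pos_of_pos (rpos' r hr) γ₅; linarith
  have hY0 : (0:ℝ) < 2 * (r:ℝ)^γ₃ := by
    have := Real.rpow_pos_of_pos (rpos' r hr) γ₃; linarith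
  intro k
  induction k with
  | zero =>
    intro _
    have h0 : fcnt N Γ h P r γ₄ γ₃ root Q 0 = 0 := by
      unfold fcnt; simp
    rw [h0]
    simp
  | succ k ih =>
    intro hk1
    have IH := ih (by omega)
    have hanc := anc_kept N Γ h P r γ₄ hT hr γ₃ root hroot hn hQ
    have hchosen : P^[k] Q ∈ chosen N Γ h P r γ₄ γ₃ (P^[k+1] Q) :=
      (hanc k (by omega)).2 (by omega)
    have hmem1 : P^[k+1] Q ∈ kept N Γ h P r γ₄ γ₃ root (n - (k+1)) :=
      (hanc (k+1) hk1).1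
    obtain ⟨haΓ, hah⟩ := kept_spec N Γ h P r γ₄ hT hr γ₃ root hroot _ (by omega) _ hmem1
    have halt : h (P^[k+1] Q) < N := by omega
    have hchil : children (GammaP N Γ h P r γ₄ γ₃ root) h P (P^[k+1] Q) =
        chosen N Γ h P r γ₄ γ₃ (P^[k+1] Q) :=
      children_GammaP N Γ h P r γ₄ hT hr γ₃ root hroot (by omega) hmem1
    have hIcc : Finset.Icc 1 (k+1) = insert (k+1) (Finset.Icc 1 k) := by
      ext x; simp only [Finset.mem_Icc, Finset.mem_insert]; omega
    have hnotin : (k+1) ∉ (Finset.Icc 1 k).filter (fun j =>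
        (r:ℝ)^γ₃ ≤ ((children (GammaP N Γ h P r γ₄ γ₃ root) h P (P^[j] Q)).card : ℝ)) := by
      intro hmem
      have := Finset.mem_Icc.mp (Finset.filter_subset _ _ hmem)
      omega
    have hfle := fcnt_le N Γ h P r γ₄ γ₃ root Q k
    by_cases hf : (r:ℝ)^γ₃ ≤ ((Tset N Γ h P r γ₄ (P^[k+1] Q)).card : ℝ)
    · have hcE : chosen N Γ h P r γ₄ γ₃ (P^[k+1] Q) = Tset N Γ h P r γ₄ (P^[k+1] Q) := by
        unfold chosen; rw [if_pos hf]
      have hpred : (r:ℝ)^γ₃ ≤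
          ((children (GammaP N Γ h P r γ₄ γ₃ root) h P (P^[k+1] Q)).card : ℝ) := by
        rw [hchil, hcE]; exact hf
      have hfcnt : fcnt N Γ h P r γ₄ γ₃ root Q (k+1) = fcnt N Γ h P r γ₄ γ₃ root Q k + 1 := by
        unfold fcnt
        rw [hIcc, Finset.filter_insert, if_pos hpred, Finset.card_insert_of_notMem hnotin]
      have hb := fertile_child_bound N Γ h P r γ₄ hT hr γ₅ haΓ halt (hch _ haΓ) (by
        rw [← hcE]; exact hchosen)
      rw [hfcnt]
      have e2 : k + 1 - (fcnt N Γ h P r γ₄ γ₃ root Q k + 1) =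
          k - fcnt N Γ h P r γ₄ γ₃ root Q k := by omega
      rw [e2]
      have hstep : muv N Γ h P r γ₄ (P^[k+1] Q) ≤
          (2 * (r:ℝ)^γ₅) * muv N Γ h P r γ₄ (P^[k] Q) := by
        rw [div_le_iff₀ hX0] at hb
        linarith [hb]
      calc muv N Γ h P r γ₄ (P^[k+1] Q)
          ≤ (2 * (r:ℝ)^γ₅) * muv N Γ h P r γ₄ (P^[k] Q) := hstep
        _ ≤ (2 * (r:ℝ)^γ₅) * (muv N Γ h P r γ₄ Q *
              (2 * (r:ℝ)^γ₅) ^ (fcnt N Γ h P r γ₄ γ₃ root Q k) *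
              (2 * (r:ℝ)^γ₃) ^ (k - fcnt N Γ h P r γ₄ γ₃ root Q k)) :=
            mul_le_mul_of_nonneg_left IH hX0.le
        _ = muv N Γ h P r γ₄ Q *
              (2 * (r:ℝ)^γ₅) ^ (fcnt N Γ h P r γ₄ γ₃ root Q k + 1) *
              (2 * (r:ℝ)^γ₃) ^ (k - fcnt N Γ h P r γ₄ γ₃ root Q k) := by
            rw [pow_succ]; ring
    · have hcE : chosen N Γ h P r γ₄ γ₃ (P^[k+1] Q) =
          {lazyPick N Γ h P r γ₄ (P^[k+1] Q)} := by
        unfold chosen; rw [if_neg hf]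
      have hpeq : P^[k] Q = lazyPick N Γ h P r γ₄ (P^[k+1] Q) := by
        have := hchosen; rw [hcE, Finset.mem_singleton] at this; exact this
      have hone : 1 < (r:ℝ)^γ₃ := by
        refine (Real.one_lt_rpow_iff_of_pos (rpos' r hr)).mpr (Or.inl ⟨?_, hγ3⟩)
        exact_mod_cast (by omega : 1 < r)
      have hpred : ¬ ((r:ℝ)^γ₃ ≤
          ((children (GammaP N Γ h P r γ₄ γ₃ root) h P (P^[k+1] Q)).card : ℝ)) := by
        rw [hchil, hcE, Finset.card_singleton]
        push_cast
        linarith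
      have hfcnt : fcnt N Γ h P r γ₄ γ₃ root Q (k+1) = fcnt N Γ h P r γ₄ γ₃ root Q k := by
        unfold fcnt
        rw [hIcc, Finset.filter_insert, if_neg hpred]
      have hb := lazy_child_bound N Γ h P r γ₄ hT hr γ₃ haΓ halt hf
      rw [← hpeq] at hb
      rw [hfcnt]
      have e2 : k + 1 - fcnt N Γ h P r γ₄ γ₃ root Q k =
          (k - fcnt N Γ h P r γ₄ γ₃ root Q k) + 1 := by omega
      rw [e2]
      have hstep : muv N Γ h P r γ₄ (P^[k+1] Q) ≤
          (2 * (r:ℝ)^γ₃) * muv N Γ h P r γ₄ (P^[k] Q) := by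
        rw [div_le_iff₀ hY0] at hb
        linarith [hb]
      calc muv N Γ h P r γ₄ (P^[k+1] Q)
          ≤ (2 * (r:ℝ)^γ₃) * muv N Γ h P r γ₄ (P^[k] Q) := hstep
        _ ≤ (2 * (r:ℝ)^γ₃) * (muv N Γ h P r γ₄ Q *
              (2 * (r:ℝ)^γ₅) ^ (fcnt N Γ h P r γ₄ γ₃ root Q k) *
              (2 * (r:ℝ)^γ₃) ^ (k - fcnt N Γ h P r γ₄ γ₃ root Q k)) :=
            mul_le_mul_of_nonneg_left IH hY0.le
        _ = muv N Γ h P r γ₄ Q *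
              (2 * (r:ℝ)^γ₅) ^ (fcnt N Γ h P r γ₄ γ₃ root Q k) *
              (2 * (r:ℝ)^γ₃) ^ ((k - fcnt N Γ h P r γ₄ γ₃ root Q k) + 1) := by
            rw [pow_succ]; ring

end Aux

theorem subtree_with_fertile_ancestry
    {α : Type*} [DecidableEq α] (r : ℕ) (hr : 2 ≤ r)
    (γ₃ γ₄ γ₅ : ℝ) (h3 : 0 < γ₃) (h34 : γ₃ < γ₄) (h45 : γ₄ < γ₅)
    (hB : 0 < γ₄ - γ₃ - Real.logb r 2)
    (N : ℕ) (Γ : Finset α) (h : α → ℕ) (P : α → α)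
    (hT : IsTree N Γ h P)
    (hch : ∀ q ∈ Γ, ((children Γ h P q).card : ℝ) ≤ (r : ℝ) ^ γ₅) :
    ∃ Γ' ⊆ Γ, IsTree N Γ' h P ∧
      ∀ Q ∈ Γ',
        (((ancestry h P Q).card : ℝ) * (γ₄ - γ₃ - Real.logb r 2) +
            Real.logb r (treeContent N Γ h P r γ₄)) /
          ((γ₅ - γ₄ + Real.logb r 2) + (γ₄ - γ₃ - Real.logb r 2)) ≤
        ((fertileAnc Γ' h P ((r : ℝ) ^ γ₃) Q).card : ℝ) := by
  obtain ⟨root, ⟨hrΓ, hr0⟩, _⟩ := hT.1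
  have hroot : root ∈ Γ ∧ h root = 0 := ⟨hrΓ, hr0⟩
  have hrpos := rpos' r hr
  have hr1 : (1:ℝ) < (r:ℝ) := by exact_mod_cast (by omega : 1 < r)
  have hrne1 : (r:ℝ) ≠ 1 := ne_of_gt hr1
  refine ⟨GammaP N Γ h P r γ₄ γ₃ root, GammaP_sub N Γ h P r γ₄ hT hr γ₃ root hroot,
    GammaP_isTree N Γ h P r γ₄ hT hr γ₃ root hroot, ?_⟩
  intro Q hQmem
  obtain ⟨hhQ, hQk⟩ := (mem_GammaP N Γ h P r γ₄ hT hr γ₃ root hroot).mp hQmem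
  have hQΓ : Q ∈ Γ := GammaP_sub N Γ h P r γ₄ hT hr γ₃ root hroot hQmem
  set n := h Q with hn'
  set f := fcnt N Γ h P r γ₄ γ₃ root Q n with hf'
  have hfle : f ≤ n := fcnt_le N Γ h P r γ₄ γ₃ root Q n
  set L2 := Real.logb r 2 with hL2'
  -- injectivity of the ancestor map
  have hinj : Set.InjOn (fun k => P^[k] Q) (Finset.Icc 1 n) := by
    intro a ha b hb hab
    have ha' := Finset.mem_Icc.mp ha
    have hb' := Finset.mem_Icc.mp hb
    have h1 := (iter_mem N Γ h P hT hQΓ a (by omega)).2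
    have h2 := (iter_mem N Γ h P hT hQΓ b (by omega)).2
    simp only at hab
    rw [hab] at h1
    omega
  have hanccard : (ancestry h P Q).card = n := by
    unfold ancestry
    rw [Finset.card_image_of_injOn hinj, Nat.card_Icc]
    omega
  have hfert : (fertileAnc (GammaP N Γ h P r γ₄ γ₃ root) h P ((r : ℝ) ^ γ₃) Q).card = f := by
    unfold fertileAnc ancestry
    rw [Finset.filter_image, Finset.card_image_of_injOn
      (hinj.mono (by exact_mod_cast Finset.filter_subset _ _))]
    rfl
  -- the chain of inequalities
  have hbb := branch_bound N Γ h P r γ₄ hT hr γ₃ root hroot γ₅ h3 hch hhQ hQk n le_rfl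
  have hrooteq : P^[n] Q = root := by
    have hm := (anc_kept N Γ h P r γ₄ hT hr γ₃ root hroot hhQ hQk n le_rfl).1
    rw [Nat.sub_self, kept] at hm
    exact Finset.mem_singleton.mp hm
  have h1 : treeContent N Γ h P r γ₄ ≤ muv N Γ h P r γ₄ root :=
    treeContent_le_muv_root N Γ h P r γ₄ hT hr hrΓ hr0
  have h2 : muv N Γ h P r γ₄ Q ≤ (r:ℝ) ^ (-(n : ℝ) * γ₄) := muv_le N Γ h P r γ₄ hT Q
  have hXpow : (0:ℝ) ≤ (2 * (r:ℝ)^γ₅) ^ f := by positivity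
  have hYpow : (0:ℝ) ≤ (2 * (r:ℝ)^γ₃) ^ (n - f) := by positivity
  have h3' : treeContent N Γ h P r γ₄ ≤
      (r:ℝ) ^ (-(n : ℝ) * γ₄) * (2 * (r:ℝ)^γ₅) ^ f * (2 * (r:ℝ)^γ₃) ^ (n - f) := by
    rw [hrooteq] at hbb
    calc treeContent N Γ h P r γ₄ ≤ muv N Γ h P r γ₄ root := h1
      _ ≤ muv N Γ h P r γ₄ Q * (2 * (r:ℝ)^γ₅) ^ f * (2 * (r:ℝ)^γ₃) ^ (n - f) := hbb
      _ ≤ (r:ℝ) ^ (-(n : ℝ) * γ₄) * (2 * (r:ℝ)^γ₅) ^ f * (2 * (r:ℝ)^γ₃) ^ (n - f) := by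
          have := mul_le_mul_of_nonneg_right
            (mul_le_mul_of_nonneg_right h2 hXpow) hYpow
          exact this
  -- rewrite the right-hand side as a single power of r
  have h2eq : (2:ℝ) = (r:ℝ) ^ L2 := (Real.rpow_logb hrpos hrne1 (by norm_num)).symm
  have hXeq : (2 * (r:ℝ)^γ₅) = (r:ℝ) ^ (L2 + γ₅) := by
    rw [Real.rpow_add hrpos, ← h2eq]
  have hYeq : (2 * (r:ℝ)^γ₃) = (r:ℝ) ^ (L2 + γ₃) := by
    rw [Real.rpow_add hrpos, ← h2eq]
  have hpowX : (2 * (r:ℝ)^γ₅) ^ f = (r:ℝ) ^ ((L2 + γ₅) * (f:ℝ)) := by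
    rw [hXeq, Real.rpow_mul hrpos.le, Real.rpow_natCast]
  have hpowY : (2 * (r:ℝ)^γ₃) ^ (n - f) = (r:ℝ) ^ ((L2 + γ₃) * ((n - f : ℕ):ℝ)) := by
    rw [hYeq, Real.rpow_mul hrpos.le, Real.rpow_natCast]
  have hE : (r:ℝ) ^ (-(n : ℝ) * γ₄) * (2 * (r:ℝ)^γ₅) ^ f * (2 * (r:ℝ)^γ₃) ^ (n - f) =
      (r:ℝ) ^ (-(n : ℝ) * γ₄ + (L2 + γ₅) * (f:ℝ) + (L2 + γ₃) * ((n - f : ℕ):ℝ)) := by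
    rw [hpowX, hpowY, ← Real.rpow_add hrpos, ← Real.rpow_add hrpos]
  rw [hE] at h3'
  have hHpos : 0 < treeContent N Γ h P r γ₄ := treeContent_pos N Γ h P r γ₄ hT hr
  have hlog : Real.logb r (treeContent N Γ h P r γ₄) ≤
      -(n : ℝ) * γ₄ + (L2 + γ₅) * (f:ℝ) + (L2 + γ₃) * ((n - f : ℕ):ℝ) := by
    calc Real.logb r (treeContent N Γ h P r γ₄)
        ≤ Real.logb r ((r:ℝ) ^ (-(n : ℝ) * γ₄ + (L2 + γ₅) * (f:ℝ) + (L2 + γ₃) * ((n - f : ℕ):ℝ))) :=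
          Real.logb_le_logb_of_le hr1 hHpos h3'
      _ = -(n : ℝ) * γ₄ + (L2 + γ₅) * (f:ℝ) + (L2 + γ₃) * ((n - f : ℕ):ℝ) :=
          Real.logb_rpow hrpos hrne1
  have hmcast : ((n - f : ℕ):ℝ) = (n:ℝ) - (f:ℝ) := Nat.cast_sub hfle
  have hD : 0 < (γ₅ - γ₄ + L2) + (γ₄ - γ₃ - L2) := by linarith
  rw [hanccard, hfert]
  rw [div_le_iff₀ hD]
  rw [hmcast] at hlog
  nlinarith [hlog]
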